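/- For involutions π, ρ ∈ S_N, if the B-orbit closure of π_< contains the B-orbit of ρ_<, then for all 1 ≤ i < j ≤ N the interval rank rank π_{[i,j]} := #{i ≤ a < b ≤ j : π(a) = b} satisfies rank π_{[i,j]} ≥ rank ρ_{[i,j]}. -/

import Mathlib

/- STATEMENT 13: if the B-orbit closure of π_< contains the B-orbit of ρ_<,
then the interval ranks satisfy rank π_{[i,j]} ≥ rank ρ_{[i,j]} for all i < j. -/

open Matrix

noncomputable section

def strictUpper {N : ℕ} (π : Equiv.Perm (Fin N)) : Matrix (Fin N) (Fin N) ℂ :=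
  Matrix.of fun i j => if π i = j ∧ i < j then 1 else 0

/-- The orbit `B·π_<` under conjugation by invertible upper triangular
matrices, inside the space of `N × N` complex matrices. -/
def Borbit {N : ℕ} (π : Equiv.Perm (Fin N)) : Set (Fin N → Fin N → ℂ) :=
  {X | ∃ b : (Matrix (Fin N) (Fin N) ℂ)ˣ,
    (∀ i j : Fin N, j < i → (b : Matrix (Fin N) (Fin N) ℂ) i j = 0) ∧
    Matrix.of X = (b : Matrix (Fin N) (Fin N) ℂ) * strictUpper π *
      ((↑b⁻¹ : Matrix (Fin N) (Fin N) ℂ)) }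

/-- `rank π_{[i,j]} = #{i ≤ a < b ≤ j : π a = b}`: the number of complete
arches of `π` between positions `i` and `j`. -/
def intervalRank {N : ℕ} (π : Equiv.Perm (Fin N)) (i j : Fin N) : ℕ :=
  (Finset.univ.filter fun p : Fin N × Fin N =>
    i ≤ p.1 ∧ p.1 < p.2 ∧ p.2 ≤ j ∧ π p.1 = p.2).card

set_option linter.unusedSectionVars false
open Submodule ComplexOrder

section Aux
variable {m n : Type*} [Fintype m] [Fintype n] [DecidableEq m] [DecidableEq n]


variable {m n : Type*} [Fintype m] [Fintype n] [DecidableEq m] [DecidableEq n]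

/-- Selection matrices realize `submatrix` as a product. -/
lemma submatrix_eq_mul {k : ℕ} (A : Matrix m n ℂ) (f : Fin k → m) (g : Fin k → n) :
    A.submatrix f g =
      (Matrix.of fun i a => if a = f i then (1 : ℂ) else 0) * A *
        (Matrix.of fun a i => if a = g i then (1 : ℂ) else 0) := by
  ext i j
  simp only [mul_apply, submatrix_apply, of_apply]
  simp [Finset.sum_ite_eq', ite_and, Finset.sum_ite_eq]

lemma rank_submatrix_le'' {k : ℕ} (A : Matrix m n ℂ) (f : Fin k → m) (g : Fin k → n) :
    (A.submatrix f g).rank ≤ A.rank := by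
  rw [submatrix_eq_mul A f g]
  exact (rank_mul_le_left _ _).trans (rank_mul_le_right _ _)

lemma le_rank_of_det_ne_zero {k : ℕ} (A : Matrix m n ℂ) {f : Fin k → m} {g : Fin k → n}
    (h : (A.submatrix f g).det ≠ 0) : k ≤ A.rank := by
  have h1 : (A.submatrix f g).rank = k := by
    rw [rank_of_isUnit _ (((A.submatrix f g).isUnit_iff_isUnit_det).2 h.isUnit), Fintype.card_fin]
  rw [← h1]; exact rank_submatrix_le'' A f g



variable {m n : Type*} [Fintype m] [Fintype n] [DecidableEq m] [DecidableEq n]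

lemma exists_li_cols {k : ℕ} (A : Matrix m n ℂ) (h : k ≤ A.rank) :
    ∃ g : Fin k → n, LinearIndependent ℂ fun j => Aᵀ (g j) := by
  obtain ⟨b, hbsub, hbspan, hbli⟩ := exists_linearIndependent ℂ (Set.range Aᵀ)
  have hfin : b.Finite := Set.Finite.subset (Set.finite_range Aᵀ) hbsub
  haveI : Fintype b := hfin.fintype
  have hcard : k ≤ hfin.toFinset.card := by
    have h1 : A.rank = Module.finrank ℂ (span ℂ b) := by
      rw [rank_eq_finrank_span_cols, hbspan]; rfl
    have h2 : Module.finrank ℂ (span ℂ b) = b.toFinset.card := finrank_span_set_eq_card hbli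
    have h3 : b.toFinset = hfin.toFinset := by simp
    rw [← h3]; omega
  obtain ⟨t, hts, htc⟩ := Finset.exists_subset_card_eq hcard
  let e : t ≃ Fin k := Fintype.equivFinOfCardEq (by simpa using htc)
  have hmem : ∀ x : t, (x : m → ℂ) ∈ b := fun x => hfin.mem_toFinset.1 (hts x.2)
  choose g hg using fun x : t => hbsub (hmem x)
  refine ⟨fun j => g (e.symm j), ?_⟩
  have key : (fun j => Aᵀ (g (e.symm j))) =
      (fun x : b => (x : m → ℂ)) ∘ (fun j => ⟨(e.symm j : m → ℂ), hmem _⟩) := by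
    funext j; exact hg (e.symm j)
  rw [key]
  refine hbli.comp _ fun j₁ j₂ hj => ?_
  have : (e.symm j₁ : m → ℂ) = (e.symm j₂ : m → ℂ) := congrArg (fun z : b => (z : m → ℂ)) hj
  exact e.symm.injective (Subtype.ext this)

lemma det_ne_zero_of_li_rows {k : ℕ} {C : Matrix (Fin k) (Fin k) ℂ}
    (h : LinearIndependent ℂ C) : C.det ≠ 0 := by
  intro hdet
  have : Cᵀ.det = 0 := by rw [det_transpose]; exact hdet
  obtain ⟨v, hv, hmul⟩ := (Matrix.exists_mulVec_eq_zero_iff).2 this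
  refine hv ?_
  have := Fintype.linearIndependent_iff.1 h v ?_
  · exact funext this
  · funext i
    have := congrFun hmul i
    simpa [Matrix.mulVec, dotProduct, mul_comm] using this




lemma exists_det_ne_zero {k : ℕ} (A : Matrix m n ℂ) (h : k ≤ A.rank) :
    ∃ (f : Fin k → m) (g : Fin k → n), (A.submatrix f g).det ≠ 0 := by
  obtain ⟨g, hg⟩ := exists_li_cols A h
  set B : Matrix m (Fin k) ℂ := A.submatrix id g with hB
  have hBt : LinearIndependent ℂ Bᵀ := by
    have : Bᵀ = fun j => Aᵀ (g j) := by ext j i; simp [hB]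
    rw [this]; exact hg
  have hBrank : Bᵀ.rank = k := by
    erw [hBt.rank_matrix, Fintype.card_fin]
  obtain ⟨f, hf⟩ := exists_li_cols Bᵀ (le_of_eq hBrank.symm)
  refine ⟨f, g, ?_⟩
  apply det_ne_zero_of_li_rows
  have : (A.submatrix f g) = fun j => Bᵀᵀ (f j) := by ext j i; simp [hB]
  rw [this]; exact hf

end Aux

/-- the set of `X` whose block has rank `≤ r` is closed. -/
lemma isClosed_rank_le {N : ℕ} (p q : Fin N → Prop) [DecidablePred p] [DecidablePred q] (r : ℕ) :
    IsClosed {X : Fin N → Fin N → ℂ | ((Matrix.of X).toBlock p q).rank ≤ r} := by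
  rw [← isOpen_compl_iff]
  have : {X : Fin N → Fin N → ℂ | ((Matrix.of X).toBlock p q).rank ≤ r}ᶜ =
      ⋃ (f : Fin (r + 1) → {a // p a}) (g : Fin (r + 1) → {a // q a}),
        {X : Fin N → Fin N → ℂ |
          (((Matrix.of X).toBlock p q).submatrix f g).det ≠ 0} := by
    ext X
    simp only [Set.mem_compl_iff, Set.mem_setOf_eq, not_le, Set.mem_iUnion]
    constructor
    · intro hr
      exact exists_det_ne_zero _ hr
    · rintro ⟨f, g, hfg⟩
      exact le_rank_of_det_ne_zero _ hfg
  rw [this]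
  refine isOpen_iUnion fun f => isOpen_iUnion fun g => ?_
  have hc : Continuous fun X : Fin N → Fin N → ℂ =>
      (((Matrix.of X).toBlock p q).submatrix f g).det := by
    refine Continuous.matrix_det (continuous_matrix fun i j => ?_)
    exact (continuous_apply_apply _ _)
  exact IsOpen.preimage hc isOpen_ne
lemma rank_block_strictUpper {N : ℕ} (π : Equiv.Perm (Fin N)) (i j : Fin N) :
    ((strictUpper π).toBlock (fun a => i ≤ a) (fun b => b ≤ j)).rank = intervalRank π i j := by
  set S := (strictUpper π).toBlock (fun a => i ≤ a) (fun b => b ≤ j) with hS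
  set w : {a : Fin N // i ≤ a} → ℂ :=
    fun a => if a.val < π a.val ∧ π a.val ≤ j then 1 else 0 with hw
  have key : S * Sᴴ = Matrix.diagonal w := by
    ext a a'
    simp only [mul_apply, hS, toBlock_apply, conjTranspose_apply, strictUpper, of_apply]
    by_cases haa : a = a'
    · subst haa
      simp only [diagonal_apply_eq, hw]
      by_cases hc : a.val < π a.val ∧ π a.val ≤ j
      · rw [if_pos hc]
        rw [Finset.sum_eq_single (⟨π a.val, hc.2⟩ : {b : Fin N // b ≤ j})]
        · simp [hc.1]
        · intro b _ hb
          have : ¬ (π a.val = b.val) := fun hcon => hb (by apply Subtype.ext; simp [← hcon])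
          simp [this]
        · simp
      · rw [if_neg hc]
        apply Finset.sum_eq_zero
        intro b _
        by_cases h1 : π a.val = b.val ∧ a.val < b.val
        · exfalso; exact hc ⟨h1.1 ▸ h1.2, h1.1 ▸ b.2⟩
        · rw [if_neg h1]; simp
    · rw [diagonal_apply_ne _ haa]
      apply Finset.sum_eq_zero
      intro b _
      by_cases h1 : π a.val = b.val ∧ a.val < b.val
      · have h2 : ¬ (π a'.val = b.val ∧ a'.val < b.val) := by
          rintro ⟨h3, -⟩
          exact haa (Subtype.ext (π.injective (by rw [h1.1, h3])))
        rw [if_neg h2]; simp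
      · rw [if_neg h1]; simp
  have hrank : S.rank = (Matrix.diagonal w).rank := by
    rw [← key, rank_self_mul_conjTranspose]
  rw [hrank, rank_diagonal]
  have hwiff : ∀ x : {a : Fin N // i ≤ a}, w x ≠ 0 ↔
      ((x : Fin N) < π (x : Fin N) ∧ π (x : Fin N) ≤ j) := by
    intro x; rw [hw]; dsimp only; split_ifs with hc <;> simp [hc]
  have hcount : intervalRank π i j =
      (Finset.univ.filter fun a : Fin N => i ≤ a ∧ a < π a ∧ π a ≤ j).card := by
    rw [intervalRank]
    refine Finset.card_nbij' (fun p => p.1) (fun a => (a, π a)) ?_ ?_ ?_ ?_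
    · intro p hp; simp only [Finset.coe_filter, Set.mem_setOf_eq, Finset.mem_coe, Finset.mem_filter, Finset.mem_univ, true_and] at hp ⊢
      obtain ⟨h1, h2, h3, h4⟩ := hp; exact ⟨h1, h4 ▸ h2, h4 ▸ h3⟩
    · intro a ha; simp only [Finset.coe_filter, Set.mem_setOf_eq, Finset.mem_coe, Finset.mem_filter, Finset.mem_univ, true_and] at ha
      exact Finset.mem_filter.2 ⟨Finset.mem_univ _, ha.1, ha.2.1, ha.2.2, rfl⟩
    · intro p hp; simp only [Finset.coe_filter, Set.mem_setOf_eq, Finset.mem_coe, Finset.mem_filter, Finset.mem_univ, true_and] at hp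
      exact Prod.ext rfl hp.2.2.2
    · intro a _; rfl
  calc Fintype.card {x // w x ≠ 0}
      = Fintype.card {a : Fin N // i ≤ a ∧ a < π a ∧ π a ≤ j} :=
        Fintype.card_congr ((Equiv.subtypeEquivRight hwiff).trans
          (Equiv.subtypeSubtypeEquivSubtypeInter (fun a : Fin N => i ≤ a) (fun a => a < π a ∧ π a ≤ j)))
    _ = (Finset.univ.filter fun a : Fin N => i ≤ a ∧ a < π a ∧ π a ≤ j).card :=
        Fintype.card_subtype _
    _ = intervalRank π i j := hcount.symm


/-- An upper triangular invertible matrix has nonzero diagonal entries, and its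
diagonal blocks have nonzero determinant. -/
lemma det_toBlock_ne_zero {N : ℕ} (u : Matrix (Fin N) (Fin N) ℂ)
    (hu : ∀ a c : Fin N, c < a → u a c = 0) (hdet : u.det ≠ 0)
    (p : Fin N → Prop) [DecidablePred p] :
    (u.toBlock p p).det ≠ 0 := by
  have hbt : u.BlockTriangular id := fun a c h => hu a c h
  have hdiag : ∀ a : Fin N, u a a ≠ 0 := by
    rw [det_of_upperTriangular hbt] at hdet
    exact fun a => Finset.prod_ne_zero_iff.1 hdet a (Finset.mem_univ a)
  have hbt' : (u.toBlock p p).BlockTriangular id := by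
    intro a c h
    exact hu a c (by exact_mod_cast h)
  rw [det_of_upperTriangular hbt']
  exact Finset.prod_ne_zero_iff.2 fun a _ => hdiag a

/-- conjugating by an invertible upper triangular matrix preserves the rank of
southwest blocks. -/
lemma rank_toBlock_conj {N : ℕ} (M : Matrix (Fin N) (Fin N) ℂ)
    (b : (Matrix (Fin N) (Fin N) ℂ)ˣ)
    (hb : ∀ a c : Fin N, c < a → (b : Matrix (Fin N) (Fin N) ℂ) a c = 0) (i j : Fin N) :
    (((b : Matrix (Fin N) (Fin N) ℂ) * M * (↑b⁻¹ : Matrix (Fin N) (Fin N) ℂ)).toBlock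
        (fun a => i ≤ a) (fun c => c ≤ j)).rank =
      (M.toBlock (fun a => i ≤ a) (fun c => c ≤ j)).rank := by
  set u : Matrix (Fin N) (Fin N) ℂ := (b : Matrix (Fin N) (Fin N) ℂ) with hu
  set v : Matrix (Fin N) (Fin N) ℂ := (↑b⁻¹ : Matrix (Fin N) (Fin N) ℂ) with hv
  haveI : Invertible u := b.invertible
  have hubt : u.BlockTriangular id := fun a c h => hb a c h
  have hvbt : ∀ a c : Fin N, c < a → v a c = 0 := by
    have h1 : u⁻¹.BlockTriangular id := blockTriangular_inv_of_blockTriangular hubt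
    have h2 : v = u⁻¹ := by rw [hv, hu, Matrix.coe_units_inv]
    intro a c h; rw [h2]; exact h1 h
  set p : Fin N → Prop := fun a => i ≤ a with hp
  set q : Fin N → Prop := fun c => c ≤ j with hq
  have hsplit : (u * M * v).toBlock p q = (u.toBlock p p) * (M.toBlock p q) * (v.toBlock q q) := by
    have h1 : (u * (M * v)).toBlock p q =
        u.toBlock p p * (M * v).toBlock p q +
          (u.toBlock p fun a => ¬ p a) * (M * v).toBlock (fun a => ¬ p a) q :=
      toBlock_mul_eq_add p p q u (M * v)
    have h2 : (u.toBlock p fun a => ¬ p a) = 0 := by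
      ext a c
      exact hb a.1 c.1 (lt_of_not_ge c.2 |>.trans_le a.2)
    have h3 : (M * v).toBlock p q =
        M.toBlock p q * v.toBlock q q +
          (M.toBlock p fun c => ¬ q c) * v.toBlock (fun c => ¬ q c) q :=
      toBlock_mul_eq_add p q q M v
    have h4 : (v.toBlock (fun c => ¬ q c) q) = 0 := by
      ext c l
      exact hvbt c.1 l.1 (l.2.trans_lt (lt_of_not_ge c.2))
    rw [mul_assoc, h1, h2, h3, h4]
    simp [mul_add]
    exact (Matrix.mul_assoc (u.toBlock p p) (M.toBlock p q) (v.toBlock q q)).symm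
  rw [hsplit]
  have hdu : u.det ≠ 0 := by
    have := (Matrix.isUnit_iff_isUnit_det _).1 b.isUnit
    exact this.ne_zero
  have hdv : v.det ≠ 0 := by
    have := (Matrix.isUnit_iff_isUnit_det _).1 (b⁻¹).isUnit
    exact this.ne_zero
  rw [rank_mul_eq_left_of_isUnit_det _ _
    ((det_toBlock_ne_zero v hvbt hdv q).isUnit)]
  rw [rank_mul_eq_right_of_isUnit_det _ _
    ((det_toBlock_ne_zero u hb hdu p).isUnit)]

theorem closure_implies_rank_ineq {N : ℕ} (π ρ : Equiv.Perm (Fin N))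
    (hπ : ∀ x, π (π x) = x) (hρ : ∀ x, ρ (ρ x) = x)
    (h : Borbit ρ ⊆ closure (Borbit π)) :
    ∀ i j : Fin N, i < j → intervalRank ρ i j ≤ intervalRank π i j := by
  intro i j hij
  have hmem : (fun a b => strictUpper ρ a b) ∈ Borbit ρ := by
    refine ⟨1, fun a c hac => Matrix.one_apply_ne (ne_of_gt hac), ?_⟩
    simp only [inv_one, Units.val_one, Matrix.one_mul, Matrix.mul_one]
    rfl
  have hcl : (fun a b => strictUpper ρ a b) ∈ closure (Borbit π) := h hmem
  set r := intervalRank π i j with hr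
  have hclosed := isClosed_rank_le (fun a : Fin N => i ≤ a) (fun c : Fin N => c ≤ j) r
  have hsub : Borbit π ⊆
      {X : Fin N → Fin N → ℂ |
        ((Matrix.of X).toBlock (fun a : Fin N => i ≤ a) (fun c : Fin N => c ≤ j)).rank ≤ r} := by
    rintro X ⟨b, hb, hX⟩
    simp only [Set.mem_setOf_eq]
    rw [hX, rank_toBlock_conj _ b (fun a c hac => hb a c hac) i j,
      rank_block_strictUpper]
  have hfinal := closure_minimal hsub hclosed hcl
  simp only [Set.mem_setOf_eq] at hfinal
  calc intervalRank ρ i j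
      = ((strictUpper ρ).toBlock (fun a : Fin N => i ≤ a) (fun c : Fin N => c ≤ j)).rank :=
        (rank_block_strictUpper ρ i j).symm
    _ ≤ r := hfinal

end
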